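/- Let ν be a locally finite Borel measure on ℝ (finite on compact sets) and let Δ ∈ ℝ. Assume that for ν-almost every s ∈ ℝ one has (1/t)·log ν([s − e^{−t}, s + e^{−t}]) → −Δ as t → ∞. For n ∈ ℕ and s ∈ ℝ let τ̃ₙ(s) denote the unique dyadic interval [m·2^{−n}, (m+1)·2^{−n}) (m ∈ ℤ) containing s, and define uₙ(s) = −(1/n)·log ν(τ̃ₙ(s)) (which is finite for ν-almost every s). Then uₙ converges to Δ·log 2 locally in L¹(ν): for every bounded interval I ⊆ ℝ, ∫_I |uₙ(s) − Δ·log 2| dν(s) → 0 as n → ∞. -/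

import Mathlib

open MeasureTheory Filter
open scoped ENNReal

/-- The dyadic interval of level `n` containing `s`:
`[m·2⁻ⁿ, (m+1)·2⁻ⁿ)` where `m = ⌊s·2ⁿ⌋`. -/
noncomputable def dyadicInterval (n : ℕ) (s : ℝ) : Set ℝ :=
  Set.Ico ((⌊s * 2 ^ n⌋ : ℝ) / 2 ^ n) (((⌊s * 2 ^ n⌋ : ℝ) + 1) / 2 ^ n)

/-- The dyadic interval indexed by `m`. -/
noncomputable def dIvl (n : ℕ) (m : ℤ) : Set ℝ :=
  Set.Ico ((m : ℝ) / 2 ^ n) (((m : ℝ) + 1) / 2 ^ n)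

/-- The triple dyadic interval. -/
noncomputable def thrI (n : ℕ) (m : ℤ) : Set ℝ :=
  Set.Ico (((m:ℝ) - 1) / 2 ^ n) (((m:ℝ) + 2) / 2 ^ n)

lemma dyadicInterval_eq_dIvl (n : ℕ) (s : ℝ) :
    dyadicInterval n s = dIvl n ⌊s * 2 ^ n⌋ := rfl

lemma mem_dIvl_iff {n : ℕ} {m : ℤ} {s : ℝ} :
    s ∈ dIvl n m ↔ ⌊s * 2 ^ n⌋ = m := by
  have h2 : (0:ℝ) < 2 ^ n := by positivity
  rw [Int.floor_eq_iff]
  constructor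
  · rintro ⟨h1, h2'⟩
    constructor
    · rwa [div_le_iff₀ h2] at h1
    · rwa [lt_div_iff₀ h2] at h2'
  · rintro ⟨h1, h2'⟩
    constructor
    · rwa [div_le_iff₀ h2]
    · rwa [lt_div_iff₀ h2]

lemma mem_dyadicInterval_self (n : ℕ) (s : ℝ) : s ∈ dyadicInterval n s := by
  rw [dyadicInterval_eq_dIvl, mem_dIvl_iff]

lemma dyadicInterval_subset_ball (n : ℕ) (s : ℝ) :
    dyadicInterval n s ⊆ Set.Icc (s - ((2:ℝ) ^ n)⁻¹) (s + ((2:ℝ) ^ n)⁻¹) := by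
  have h2 : (0:ℝ) < 2 ^ n := by positivity
  rintro x ⟨h1, h3⟩
  rw [div_le_iff₀ h2] at h1
  rw [lt_div_iff₀ h2] at h3
  have hl : (⌊s * 2 ^ n⌋ : ℝ) ≤ s * 2 ^ n := Int.floor_le _
  have hr : s * 2 ^ n < (⌊s * 2 ^ n⌋ : ℝ) + 1 := Int.lt_floor_add_one _
  have hinv : ((2:ℝ) ^ n)⁻¹ * 2 ^ n = 1 := inv_mul_cancel₀ h2.ne'
  constructor
  · rw [sub_le_iff_le_add, ← sub_le_iff_le_add']
    rw [← mul_le_mul_iff_of_pos_right h2, sub_mul, hinv]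
    nlinarith
  · rw [← sub_le_iff_le_add]
    rw [← mul_le_mul_iff_of_pos_right h2, sub_mul, hinv]
    nlinarith

lemma ball_subset_3I (n : ℕ) (s : ℝ) :
    Set.Icc (s - ((2:ℝ) ^ n)⁻¹) (s + ((2:ℝ) ^ n)⁻¹) ⊆ thrI n ⌊s * 2 ^ n⌋ := by
  have h2 : (0:ℝ) < 2 ^ n := by positivity
  rintro x ⟨h1, h3⟩
  have hl : (⌊s * 2 ^ n⌋ : ℝ) ≤ s * 2 ^ n := Int.floor_le _
  have hr : s * 2 ^ n < (⌊s * 2 ^ n⌋ : ℝ) + 1 := Int.lt_floor_add_one _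
  have hinv : ((2:ℝ) ^ n)⁻¹ * 2 ^ n = 1 := inv_mul_cancel₀ h2.ne'
  have h1' : (s - (2 ^ n)⁻¹) * 2 ^ n ≤ x * 2 ^ n := by
    exact mul_le_mul_of_nonneg_right h1 h2.le
  have h3' : x * 2 ^ n ≤ (s + (2 ^ n)⁻¹) * 2 ^ n := by
    exact mul_le_mul_of_nonneg_right h3 h2.le
  rw [sub_mul, hinv] at h1'
  rw [add_mul, hinv] at h3'
  constructor
  · rw [div_le_iff₀ h2]; nlinarith
  · rw [lt_div_iff₀ h2]; nlinarith

lemma threeI_subset (n : ℕ) (m : ℤ) :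
    Set.Ico (((m:ℝ) - 1) / 2 ^ n) (((m:ℝ) + 2) / 2 ^ n) ⊆
      dIvl n (m-1) ∪ dIvl n m ∪ dIvl n (m+1) := by
  have h2 : (0:ℝ) < 2 ^ n := by positivity
  intro x ⟨h1, h3⟩
  rw [div_le_iff₀ h2] at h1
  rw [lt_div_iff₀ h2] at h3
  have hk1 : (m : ℤ) - 1 ≤ ⌊x * 2 ^ n⌋ := by
    apply Int.le_floor.2; push_cast; linarith
  have hk2 : ⌊x * 2 ^ n⌋ < m + 2 := by
    apply Int.floor_lt.2; push_cast; linarith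
  have hx : x ∈ dIvl n ⌊x * 2 ^ n⌋ := mem_dIvl_iff.2 rfl
  rcases lt_trichotomy ⌊x * 2 ^ n⌋ m with h | h | h
  · left; left; have : ⌊x * 2 ^ n⌋ = m - 1 := by omega
    rwa [← this]
  · left; right; rwa [← h]
  · right; have : ⌊x * 2 ^ n⌋ = m + 1 := by omega
    rwa [← this]

lemma disjoint_dIvl {n : ℕ} {m m' : ℤ} (h : m ≠ m') : Disjoint (dIvl n m) (dIvl n m') := by
  rw [Set.disjoint_left]
  intro x hx hx'
  rw [mem_dIvl_iff] at hx hx'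
  exact h (hx ▸ hx')

lemma measurableSet_dIvl (n : ℕ) (m : ℤ) : MeasurableSet (dIvl n m) := measurableSet_Ico

lemma sum_measure_dIvl_le (ν : Measure ℝ) (n : ℕ) (t : Finset ℤ) (S : Set ℝ)
    (hS : ∀ m ∈ t, dIvl n m ⊆ S) :
    ∑ m ∈ t, ν (dIvl n m) ≤ ν S := by
  rw [← measure_biUnion_finset (fun m _ m' _ h => disjoint_dIvl h)
      (fun m _ => measurableSet_dIvl n m)]
  exact measure_mono (Set.iUnion₂_subset hS)

lemma measurable_floor_mul (n : ℕ) : Measurable (fun s : ℝ => ⌊s * 2 ^ n⌋) :=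
  Int.measurable_floor.comp (measurable_id.mul_const _)

lemma measurable_dyadic_comp (n : ℕ) {β : Type*} [MeasurableSpace β] (g : ℤ → β) :
    Measurable (fun s : ℝ => g ⌊s * 2 ^ n⌋) :=
  (Measurable.of_discrete (f := g)).comp (measurable_floor_mul n)

lemma cover_Icc (n : ℕ) (a b : ℝ) :
    Set.Icc a b ⊆ ⋃ m ∈ Finset.Icc ⌊a * 2 ^ n⌋ ⌊b * 2 ^ n⌋, dIvl n m := by
  intro s hs
  have h2 : (0:ℝ) ≤ 2 ^ n := by positivity
  refine Set.mem_biUnion ?_ (mem_dIvl_iff.2 rfl)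
  exact Finset.mem_Icc.mpr ⟨Int.floor_mono (mul_le_mul_of_nonneg_right hs.1 h2),
    Int.floor_mono (mul_le_mul_of_nonneg_right hs.2 h2)⟩

lemma dIvl_subset_Icc {n : ℕ} {a b : ℝ} {k : ℤ} (h1 : ⌊a * 2 ^ n⌋ - 1 ≤ k)
    (h2 : k ≤ ⌊b * 2 ^ n⌋ + 1) : dIvl n k ⊆ Set.Icc (a - 2) (b + 2) := by
  have hp : (0:ℝ) < 2 ^ n := by positivity
  have hp1 : (1:ℝ) ≤ 2 ^ n := one_le_pow₀ (by norm_num)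
  intro x ⟨hx1, hx2⟩
  have ha : a * 2 ^ n - 1 < (⌊a * 2 ^ n⌋ : ℝ) := Int.sub_one_lt_floor _
  have hb : (⌊b * 2 ^ n⌋ : ℝ) ≤ b * 2 ^ n := Int.floor_le _
  have hk1 : ((⌊a * 2 ^ n⌋ : ℝ) - 1) ≤ (k : ℝ) := by push_cast; exact_mod_cast h1
  have hk2 : (k : ℝ) ≤ (⌊b * 2 ^ n⌋ : ℝ) + 1 := by push_cast; exact_mod_cast h2
  rw [div_le_iff₀ hp] at hx1
  rw [lt_div_iff₀ hp] at hx2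
  constructor
  · have hmul : (a - 2) * 2 ^ n ≤ x * 2 ^ n := by nlinarith
    exact le_of_mul_le_mul_right hmul hp
  · have hmul : x * 2 ^ n ≤ (b + 2) * 2 ^ n := by nlinarith
    exact le_of_mul_le_mul_right hmul hp

lemma measure_bad_le (ν : Measure ℝ) (n : ℕ) (a b ε : ℝ) :
    ν ({s : ℝ | ENNReal.ofReal (Real.exp (n * ε)) * ν (dIvl n ⌊s * 2 ^ n⌋)
        < ν (thrI n ⌊s * 2 ^ n⌋)} ∩ Set.Icc a b)
      ≤ ENNReal.ofReal (Real.exp (-(n * ε))) * (3 * ν (Set.Icc (a - 2) (b + 2))) := by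
  set t := Finset.Icc ⌊a * 2 ^ n⌋ ⌊b * 2 ^ n⌋ with ht
  set P : ℤ → Prop := fun m => ENNReal.ofReal (Real.exp (n * ε)) * ν (dIvl n m) < ν (thrI n m)
  have hcov : {s : ℝ | P ⌊s * 2 ^ n⌋} ∩ Set.Icc a b ⊆
      ⋃ m ∈ t.filter (fun m => P m), dIvl n m := by
    intro s ⟨hs1, hs2⟩
    have hm := cover_Icc n a b hs2
    simp only [Set.mem_iUnion, exists_prop] at hm ⊢
    obtain ⟨m, hmt, hms⟩ := hm
    have : ⌊s * 2 ^ n⌋ = m := mem_dIvl_iff.1 hms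
    exact ⟨m, Finset.mem_filter.2 ⟨hmt, this ▸ hs1⟩, hms⟩
  refine le_trans (measure_mono hcov) (le_trans (measure_biUnion_finset_le _ _) ?_)
  have hstep : ∀ m ∈ t.filter (fun m => P m),
      ν (dIvl n m) ≤ ENNReal.ofReal (Real.exp (-(n * ε))) *
        (ν (dIvl n (m - 1)) + ν (dIvl n m) + ν (dIvl n (m + 1))) := by
    intro m hm
    have hP : P m := (Finset.mem_filter.1 hm).2
    have h3 : ν (thrI n m) ≤ ν (dIvl n (m - 1)) + ν (dIvl n m) + ν (dIvl n (m + 1)) := by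
      refine le_trans (measure_mono ?_) (le_trans (measure_union_le _ _)
        (add_le_add (measure_union_le _ _) le_rfl))
      have := threeI_subset n m
      intro x hx
      have hx' := this hx
      push_cast at hx' ⊢
      exact hx'
    have key : ν (dIvl n m) ≤ ENNReal.ofReal (Real.exp (-(n * ε))) * ν (thrI n m) := by
      have hmul : ENNReal.ofReal (Real.exp (-(n * ε))) * ENNReal.ofReal (Real.exp (n * ε)) = 1 := by
        rw [← ENNReal.ofReal_mul (Real.exp_nonneg _), ← Real.exp_add]
        simp
      calc ν (dIvl n m) = ENNReal.ofReal (Real.exp (-(n * ε))) *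
            (ENNReal.ofReal (Real.exp (n * ε)) * ν (dIvl n m)) := by
            rw [← mul_assoc, hmul, one_mul]
        _ ≤ ENNReal.ofReal (Real.exp (-(n * ε))) * ν (thrI n m) :=
            mul_le_mul_right hP.le _
    exact le_trans key (mul_le_mul_right h3 _)
  refine le_trans (Finset.sum_le_sum hstep) ?_
  rw [← Finset.mul_sum]
  refine mul_le_mul_right ?_ _
  have hsplit : ∑ m ∈ t.filter (fun m => P m),
      (ν (dIvl n (m - 1)) + ν (dIvl n m) + ν (dIvl n (m + 1)))
      = (∑ m ∈ t.filter (fun m => P m), ν (dIvl n (m - 1)))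
        + (∑ m ∈ t.filter (fun m => P m), ν (dIvl n m))
        + (∑ m ∈ t.filter (fun m => P m), ν (dIvl n (m + 1))) := by
    rw [← Finset.sum_add_distrib, ← Finset.sum_add_distrib]
  rw [hsplit]
  have hgen : ∀ j : ℤ, (-1 ≤ j) → (j ≤ 1) → ∑ m ∈ t.filter (fun m => P m), ν (dIvl n (m + j))
      ≤ ν (Set.Icc (a - 2) (b + 2)) := by
    intro j hj1 hj2
    rw [← Finset.sum_image (f := fun k => ν (dIvl n k))
      (g := fun m => m + j) (fun x _ y _ h => by simpa using h)]
    refine sum_measure_dIvl_le ν n _ _ ?_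
    intro k hk
    simp only [Finset.mem_image] at hk
    obtain ⟨m, hm, rfl⟩ := hk
    have hm' := Finset.mem_Icc.1 (Finset.mem_filter.1 hm).1
    exact dIvl_subset_Icc (by omega) (by omega)
  have e1 := hgen (-1) (by norm_num) (by norm_num)
  have e2 := hgen 0 (by norm_num) (by norm_num)
  have e3 := hgen 1 (by norm_num) (by norm_num)
  simp only [add_zero] at e2
  have : (3 : ℝ≥0∞) = 1 + 1 + 1 := by norm_num
  rw [this, add_mul, add_mul, one_mul]
  exact add_le_add (add_le_add (by simpa only [← sub_eq_add_neg] using e1) e2) (by simpa using e3)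

lemma eventually_comparable (ν : Measure ℝ) [IsLocallyFiniteMeasure ν] (a b ε : ℝ)
    (hε : 0 < ε) :
    ∀ᵐ s ∂ν, s ∈ Set.Icc a b → ∀ᶠ n : ℕ in atTop,
      ν (thrI n ⌊s * 2 ^ n⌋) ≤ ENNReal.ofReal (Real.exp (n * ε)) * ν (dIvl n ⌊s * 2 ^ n⌋) := by
  set Bad : ℕ → Set ℝ := fun n =>
    {s : ℝ | ENNReal.ofReal (Real.exp (n * ε)) * ν (dIvl n ⌊s * 2 ^ n⌋)
      < ν (thrI n ⌊s * 2 ^ n⌋)} ∩ Set.Icc a b with hBad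
  have hC : ν (Set.Icc (a - 2) (b + 2)) ≠ ∞ := (isCompact_Icc.measure_lt_top).ne
  have hsum : (∑' n, ν (Bad n)) ≠ ∞ := by
    have hle : ∀ n : ℕ, ν (Bad n) ≤
        ENNReal.ofReal (Real.exp (-ε)) ^ n * (3 * ν (Set.Icc (a - 2) (b + 2))) := by
      intro n
      refine le_trans (measure_bad_le ν n a b ε) ?_
      refine mul_le_mul_left (le_of_eq ?_) _
      rw [← ENNReal.ofReal_pow (Real.exp_nonneg _), ← Real.exp_nat_mul]
      ring_nf
    refine ne_top_of_le_ne_top ?_ (ENNReal.tsum_le_tsum hle)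
    rw [ENNReal.tsum_mul_right, ENNReal.tsum_geometric]
    apply ENNReal.mul_ne_top
    · rw [Ne, ENNReal.inv_eq_top, tsub_eq_zero_iff_le]
      simp only [not_le]
      exact ENNReal.ofReal_lt_one.2 (Real.exp_lt_one_iff.2 (by linarith))
    · exact ENNReal.mul_ne_top (by norm_num) hC
  filter_upwards [ae_eventually_notMem hsum] with s hs hsab
  filter_upwards [hs] with n hn
  by_contra hlt
  exact hn ⟨not_le.1 hlt, hsab⟩

lemma ae_tendsto_dyadic (ν : Measure ℝ) [IsLocallyFiniteMeasure ν] (Δ : ℝ)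
    (hdim : ∀ᵐ s ∂ν, Tendsto
      (fun t : ℝ => (1 / t) *
        Real.log ((ν (Set.Icc (s - Real.exp (-t)) (s + Real.exp (-t)))).toReal))
      atTop (nhds (-Δ))) (a b : ℝ) :
    ∀ᵐ s ∂ν, s ∈ Set.Icc a b → Tendsto
      (fun n : ℕ => -(1 / (n : ℝ)) * Real.log ((ν (dyadicInterval n s)).toReal))
      atTop (nhds (Δ * Real.log 2)) := by
  have hcompk : ∀ᵐ s ∂ν, ∀ k : ℕ, s ∈ Set.Icc a b → ∀ᶠ n : ℕ in atTop,
      ν (thrI n ⌊s * 2 ^ n⌋) ≤ ENNReal.ofReal (Real.exp (n * (1 / (k + 1)))) *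
        ν (dIvl n ⌊s * 2 ^ n⌋) := by
    rw [ae_all_iff]
    intro k
    exact eventually_comparable ν a b (1 / (k + 1)) (by positivity)
  filter_upwards [hdim, hcompk] with s hd hcomp hsab
  have hlog2 : (0:ℝ) < Real.log 2 := Real.log_pos (by norm_num)
  -- exp (-(n * log 2)) = (2^n)⁻¹
  have hexp : ∀ n : ℕ, Real.exp (-((n:ℝ) * Real.log 2)) = ((2:ℝ) ^ n)⁻¹ := by
    intro n
    rw [Real.exp_neg, Real.exp_nat_mul, Real.exp_log (by norm_num)]
  -- the ball measure asymptotics along n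
  have hβ : Tendsto (fun n : ℕ => -(1 / (n : ℝ)) *
      Real.log ((ν (Set.Icc (s - ((2:ℝ) ^ n)⁻¹) (s + ((2:ℝ) ^ n)⁻¹))).toReal))
      atTop (nhds (Δ * Real.log 2)) := by
    have h1 : Tendsto (fun n : ℕ => ((n : ℝ) * Real.log 2)) atTop atTop :=
      Tendsto.atTop_mul_const hlog2 tendsto_natCast_atTop_atTop
    have h2 := (hd.comp h1).const_mul (-Real.log 2)
    have h3 : (-Real.log 2) * (-Δ) = Δ * Real.log 2 := by ring
    rw [h3] at h2
    refine h2.congr ?_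
    intro n
    simp only [Function.comp_apply]
    rw [hexp n]
    rcases Nat.eq_zero_or_pos n with hn | hn
    · subst hn; simp
    · have hn' : (n : ℝ) ≠ 0 := Nat.cast_ne_zero.2 hn.ne'
      field_simp
  set β : ℕ → ℝ := fun n => (ν (Set.Icc (s - ((2:ℝ) ^ n)⁻¹) (s + ((2:ℝ) ^ n)⁻¹))).toReal with hβdef
  set x : ℕ → ℝ := fun n => (ν (dyadicInterval n s)).toReal with hxdef
  by_cases hzero : ∃ n₀ : ℕ, ν (Set.Icc (s - ((2:ℝ) ^ n₀)⁻¹) (s + ((2:ℝ) ^ n₀)⁻¹)) = 0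
  · -- degenerate case : Δ = 0 and the dyadic measures vanish eventually
    obtain ⟨n₀, hn₀⟩ := hzero
    have hΔ : -Δ = 0 := by
      have hz : Tendsto (fun t : ℝ => (1 / t) *
          Real.log ((ν (Set.Icc (s - Real.exp (-t)) (s + Real.exp (-t)))).toReal))
          atTop (nhds 0) := by
        have hev : ∀ᶠ t : ℝ in atTop, (1 / t) *
            Real.log ((ν (Set.Icc (s - Real.exp (-t)) (s + Real.exp (-t)))).toReal) = 0 := by
          filter_upwards [eventually_ge_atTop ((n₀ : ℝ) * Real.log 2)] with t ht
          have hsub : Set.Icc (s - Real.exp (-t)) (s + Real.exp (-t)) ⊆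
              Set.Icc (s - ((2:ℝ) ^ n₀)⁻¹) (s + ((2:ℝ) ^ n₀)⁻¹) := by
            have : Real.exp (-t) ≤ ((2:ℝ) ^ n₀)⁻¹ := by
              rw [← hexp n₀]
              exact Real.exp_le_exp.2 (by linarith)
            exact Set.Icc_subset_Icc (by linarith) (by linarith)
          have : ν (Set.Icc (s - Real.exp (-t)) (s + Real.exp (-t))) = 0 :=
            le_antisymm (hn₀ ▸ measure_mono hsub) zero_le
          rw [this]
          simp
        exact Tendsto.congr' (hev.mono fun t ht => ht.symm) tendsto_const_nhds
      exact tendsto_nhds_unique hd hz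
    have hΔ0 : Δ = 0 := by linarith [neg_eq_zero.1 hΔ]
    have hev : ∀ᶠ n : ℕ in atTop,
        -(1 / (n : ℝ)) * Real.log ((ν (dyadicInterval n s)).toReal) = 0 := by
      filter_upwards [eventually_ge_atTop n₀] with n hn
      have hsub : dyadicInterval n s ⊆
          Set.Icc (s - ((2:ℝ) ^ n₀)⁻¹) (s + ((2:ℝ) ^ n₀)⁻¹) := by
        refine (dyadicInterval_subset_ball n s).trans (Set.Icc_subset_Icc ?_ ?_)
        · have : ((2:ℝ) ^ n₀)⁻¹ ≤ ((2:ℝ)^n)⁻¹ → True := fun _ => trivial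
          have hmono : ((2:ℝ) ^ n)⁻¹ ≤ ((2:ℝ) ^ n₀)⁻¹ := by
            apply inv_anti₀ (by positivity)
            exact pow_le_pow_right₀ (by norm_num) hn
          linarith
        · have hmono : ((2:ℝ) ^ n)⁻¹ ≤ ((2:ℝ) ^ n₀)⁻¹ := by
            apply inv_anti₀ (by positivity)
            exact pow_le_pow_right₀ (by norm_num) hn
          linarith
      have : ν (dyadicInterval n s) = 0 :=
        le_antisymm (hn₀ ▸ measure_mono hsub) zero_le
      rw [this]
      simp
    rw [hΔ0, zero_mul]
    exact Tendsto.congr' (hev.mono fun n hn => hn.symm) tendsto_const_nhds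
  · -- main case
    push_neg at hzero
    have hβfin : ∀ n : ℕ, ν (Set.Icc (s - ((2:ℝ) ^ n)⁻¹) (s + ((2:ℝ) ^ n)⁻¹)) ≠ ∞ :=
      fun n => (isCompact_Icc.measure_lt_top).ne
    have hβpos : ∀ n : ℕ, 0 < β n := fun n => ENNReal.toReal_pos (hzero n) (hβfin n)
    -- key eventual bounds
    have hbound : ∀ k : ℕ, ∀ᶠ n : ℕ in atTop,
        0 ≤ (-(1 / (n : ℝ)) * Real.log (x n)) - (-(1 / (n : ℝ)) * Real.log (β n)) ∧
        (-(1 / (n : ℝ)) * Real.log (x n)) - (-(1 / (n : ℝ)) * Real.log (β n)) ≤ 1 / (k + 1) := by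
      intro k
      filter_upwards [hcomp k hsab, eventually_ge_atTop 1] with n hn hn1
      have hνI : ν (dyadicInterval n s) ≤ ν (Set.Icc (s - ((2:ℝ)^n)⁻¹) (s + ((2:ℝ)^n)⁻¹)) :=
        measure_mono (dyadicInterval_subset_ball n s)
      have hball3 : ν (Set.Icc (s - ((2:ℝ)^n)⁻¹) (s + ((2:ℝ)^n)⁻¹)) ≤ ν (thrI n ⌊s * 2 ^ n⌋) :=
        measure_mono (ball_subset_3I n s)
      have hIfin : ν (dyadicInterval n s) ≠ ∞ := ne_top_of_le_ne_top (hβfin n) hνI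
      have hchain : ν (Set.Icc (s - ((2:ℝ)^n)⁻¹) (s + ((2:ℝ)^n)⁻¹)) ≤
          ENNReal.ofReal (Real.exp (n * (1 / (k + 1)))) * ν (dyadicInterval n s) := by
        rw [dyadicInterval_eq_dIvl]
        exact hball3.trans hn
      have hIpos : ν (dyadicInterval n s) ≠ 0 := by
        intro h0
        rw [dyadicInterval_eq_dIvl] at h0
        rw [dyadicInterval_eq_dIvl, h0, mul_zero] at hchain
        exact hzero n (le_antisymm hchain zero_le)
      have hxpos : 0 < x n := ENNReal.toReal_pos hIpos hIfin
      have hxleβ : x n ≤ β n := ENNReal.toReal_mono (hβfin n) hνI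
      have hβle : β n ≤ Real.exp (n * (1 / (k + 1))) * x n := by
        have := ENNReal.toReal_mono ?_ hchain
        · rwa [ENNReal.toReal_mul, ENNReal.toReal_ofReal (Real.exp_nonneg _)] at this
        · exact ENNReal.mul_ne_top ENNReal.ofReal_ne_top hIfin
      have hlogx : Real.log (x n) ≤ Real.log (β n) := Real.log_le_log hxpos hxleβ
      have hlogβ : Real.log (β n) ≤ (n : ℝ) * (1 / (k + 1)) + Real.log (x n) := by
        calc Real.log (β n) ≤ Real.log (Real.exp ((n:ℝ) * (1 / (k + 1))) * x n) :=
              Real.log_le_log (hβpos n) hβle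
          _ = (n : ℝ) * (1 / (k + 1)) + Real.log (x n) := by
              rw [Real.log_mul (Real.exp_ne_zero _) hxpos.ne', Real.log_exp]
      have hn0 : (0:ℝ) < n := by exact_mod_cast hn1
      have hdiff : (-(1 / (n : ℝ)) * Real.log (x n)) - (-(1 / (n : ℝ)) * Real.log (β n))
          = (1 / (n:ℝ)) * (Real.log (β n) - Real.log (x n)) := by ring
      constructor
      · rw [hdiff]
        exact mul_nonneg (by positivity) (by linarith)
      · rw [hdiff]
        have h1n : (1 / (n:ℝ)) * ((n:ℝ) * (1 / (k+1))) = 1 / (k+1) := by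
          field_simp
        calc (1 / (n:ℝ)) * (Real.log (β n) - Real.log (x n))
            ≤ (1 / (n:ℝ)) * ((n:ℝ) * (1 / (k+1))) := by
              apply mul_le_mul_of_nonneg_left (by linarith) (by positivity)
          _ = 1 / (k+1) := h1n
    have hdiff0 : Tendsto (fun n : ℕ =>
        (-(1 / (n : ℝ)) * Real.log (x n)) - (-(1 / (n : ℝ)) * Real.log (β n)))
        atTop (nhds 0) := by
      rw [NormedAddCommGroup.tendsto_nhds_zero]
      intro ε' hε'
      obtain ⟨k, hk⟩ := exists_nat_one_div_lt hε'
      filter_upwards [hbound k] with n hn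
      rw [Real.norm_eq_abs, abs_of_nonneg hn.1]
      exact lt_of_le_of_lt hn.2 (by exact_mod_cast hk)
    have := hdiff0.add hβ
    simp only [hβdef, sub_add_cancel, zero_add] at this
    exact this

lemma tail_bound (ν : Measure ℝ) [IsLocallyFiniteMeasure ν] (n : ℕ) (hn : 1 ≤ n) (a b : ℝ)
    (hab : a ≤ b) (c : ℝ) (hc : 2 * Real.log 2 + 2 ≤ c) :
    ∫⁻ s in Set.Icc a b, ENNReal.ofReal
        (max (-(1 / (n:ℝ)) * Real.log ((ν (dIvl n ⌊s * 2 ^ n⌋)).toReal) - c) 0) ∂ν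
      ≤ ENNReal.ofReal ((b - a + 1) * (2 * Real.exp (-(n:ℝ)))) := by
  have hlog2 : (0:ℝ) < Real.log 2 := Real.log_pos (by norm_num)
  have hcpos : (0:ℝ) < c := by linarith
  have hnpos : (0:ℝ) < n := by exact_mod_cast hn
  set φ : ℤ → ℝ := fun m => max (-(1 / (n:ℝ)) * Real.log ((ν (dIvl n m)).toReal) - c) 0 with hφ
  set t := Finset.Icc ⌊a * 2 ^ n⌋ ⌊b * 2 ^ n⌋ with ht
  have key : ∀ m ∈ t, ENNReal.ofReal (φ m) * ν (dIvl n m)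
      ≤ ENNReal.ofReal (2 * Real.exp (-(n:ℝ) * (c / 2))) := by
    intro m hm
    have hmem := Finset.mem_Icc.1 hm
    have hsub : dIvl n m ⊆ Set.Icc (a - 2) (b + 2) :=
      dIvl_subset_Icc (by omega) (by omega)
    have hfin : ν (dIvl n m) ≠ ∞ :=
      ne_top_of_le_ne_top (isCompact_Icc.measure_lt_top).ne (measure_mono hsub)
    set x := (ν (dIvl n m)).toReal with hx
    have hxnn : 0 ≤ x := ENNReal.toReal_nonneg
    have hq : ν (dIvl n m) = ENNReal.ofReal x := (ENNReal.ofReal_toReal hfin).symm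
    rw [hq, ← ENNReal.ofReal_mul (le_max_right _ 0)]
    apply ENNReal.ofReal_le_ofReal
    simp only [← hx]
    rcases le_or_gt (-(1 / (n:ℝ)) * Real.log x - c) 0 with hu | hu
    · rw [max_eq_right hu, zero_mul]
      positivity
    · rw [max_eq_left hu.le]
      have hxpos : 0 < x := by
        rcases hxnn.eq_or_lt with h | h
        · exfalso
          rw [← h, Real.log_zero, mul_zero, zero_sub] at hu
          linarith
        · exact h
      have hL : Real.log x < -(n:ℝ) * c := by
        have h1 : c < -(1 / (n:ℝ)) * Real.log x := by linarith
        have h2 : (n:ℝ) * c < (n:ℝ) * (-(1 / (n:ℝ)) * Real.log x) :=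
          mul_lt_mul_of_pos_left h1 hnpos
        have h3 : (n:ℝ) * (-(1 / (n:ℝ)) * Real.log x) = -Real.log x := by
          field_simp
        linarith [h2.trans_eq h3]
      have hxlt : x < Real.exp (-(n:ℝ) * c) := by
        calc x = Real.exp (Real.log x) := (Real.exp_log hxpos).symm
          _ < Real.exp (-(n:ℝ) * c) := Real.exp_lt_exp.2 hL
      have hsqrt : Real.sqrt x ≤ Real.exp (-(n:ℝ) * (c / 2)) := by
        have : x ≤ Real.exp (-(n:ℝ) * (c / 2)) ^ 2 := by
          rw [← Real.exp_nat_mul]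
          push_cast
          calc x ≤ Real.exp (-(n:ℝ) * c) := hxlt.le
            _ = Real.exp (2 * (-(n:ℝ) * (c/2))) := by ring_nf
          
        calc Real.sqrt x ≤ Real.sqrt (Real.exp (-(n:ℝ) * (c / 2)) ^ 2) :=
              Real.sqrt_le_sqrt this
          _ = Real.exp (-(n:ℝ) * (c / 2)) := Real.sqrt_sq (Real.exp_nonneg _)
      have hnegL : -Real.log x ≤ 2 * (Real.sqrt x)⁻¹ := by
        have hsx : 0 < Real.sqrt x := Real.sqrt_pos.2 hxpos
        have h1 : Real.log ((Real.sqrt x)⁻¹) ≤ (Real.sqrt x)⁻¹ - 1 :=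
          Real.log_le_sub_one_of_pos (by positivity)
        have h2 : Real.log ((Real.sqrt x)⁻¹) = -(Real.log x / 2) := by
          rw [Real.log_inv, Real.log_sqrt hxnn]
        nlinarith [h1, h2, inv_pos.2 hsx]
      have hfinal : (-(1 / (n:ℝ)) * Real.log x - c) * x ≤ 2 * Real.sqrt x := by
        have hsx : 0 < Real.sqrt x := Real.sqrt_pos.2 hxpos
        have hxx : (Real.sqrt x)⁻¹ * x = Real.sqrt x := by
          rw [inv_mul_eq_div, div_eq_iff hsx.ne', Real.mul_self_sqrt hxnn]
        have step1 : (-(1 / (n:ℝ)) * Real.log x - c) * x ≤ (-(1 / (n:ℝ)) * Real.log x) * x := by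
          apply mul_le_mul_of_nonneg_right (by linarith) hxnn
        have step2 : (-(1 / (n:ℝ)) * Real.log x) * x ≤ (2 * (Real.sqrt x)⁻¹) * x := by
          apply mul_le_mul_of_nonneg_right ?_ hxnn
          have hn1 : 1 / (n:ℝ) ≤ 1 := by
            rw [div_le_one hnpos]; exact_mod_cast hn
          have hposL : 0 ≤ -Real.log x := by nlinarith [hL, mul_pos hnpos hcpos]
          calc -(1 / (n:ℝ)) * Real.log x = (1 / (n:ℝ)) * (-Real.log x) := by ring
            _ ≤ 1 * (-Real.log x) := mul_le_mul_of_nonneg_right hn1 hposL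
            _ = -Real.log x := one_mul _
            _ ≤ 2 * (Real.sqrt x)⁻¹ := hnegL
        calc (-(1 / (n:ℝ)) * Real.log x - c) * x ≤ (2 * (Real.sqrt x)⁻¹) * x :=
              step1.trans step2
          _ = 2 * Real.sqrt x := by rw [mul_assoc, hxx]
      calc (-(1 / (n:ℝ)) * Real.log x - c) * x ≤ 2 * Real.sqrt x := hfinal
        _ ≤ 2 * Real.exp (-(n:ℝ) * (c / 2)) := by linarith
  -- now the covering estimate
  have hcover := lintegral_mono_set (μ := ν)
    (f := fun s => ENNReal.ofReal (φ ⌊s * 2 ^ n⌋)) (cover_Icc n a b)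
  have hsplit : ∫⁻ s in ⋃ m ∈ t, dIvl n m, ENNReal.ofReal (φ ⌊s * 2 ^ n⌋) ∂ν
      = ∑ m ∈ t, ENNReal.ofReal (φ m) * ν (dIvl n m) := by
    rw [lintegral_biUnion_finset (fun m _ m' _ h => disjoint_dIvl h)
      (fun m _ => measurableSet_dIvl n m)]
    congr 1
    funext m
    rw [setLIntegral_congr_fun (measurableSet_dIvl n m)
      (fun s hs => by rw [mem_dIvl_iff.1 hs]),
      setLIntegral_const]
  have hsum : ∑ m ∈ t, ENNReal.ofReal (φ m) * ν (dIvl n m)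
      ≤ ENNReal.ofReal ((b - a + 1) * (2 * Real.exp (-(n:ℝ)))) := by
    calc ∑ m ∈ t, ENNReal.ofReal (φ m) * ν (dIvl n m)
        ≤ ∑ _m ∈ t, ENNReal.ofReal (2 * Real.exp (-(n:ℝ) * (c / 2))) :=
          Finset.sum_le_sum key
      _ = (t.card : ℝ≥0∞) * ENNReal.ofReal (2 * Real.exp (-(n:ℝ) * (c / 2))) := by
          rw [Finset.sum_const, nsmul_eq_mul]
      _ ≤ ENNReal.ofReal ((b - a + 1) * (2 * Real.exp (-(n:ℝ)))) := by
          rw [← ENNReal.ofReal_natCast, ← ENNReal.ofReal_mul (Nat.cast_nonneg _)]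
          apply ENNReal.ofReal_le_ofReal
          have hcard : (t.card : ℝ) ≤ (b - a + 1) * 2 ^ n := by
            have h1 : t.card = (⌊b * 2 ^ n⌋ + 1 - ⌊a * 2 ^ n⌋).toNat := Int.card_Icc _ _
            have hfa : a * 2 ^ n - 1 < (⌊a * 2 ^ n⌋ : ℝ) := Int.sub_one_lt_floor _
            have hfb : (⌊b * 2 ^ n⌋ : ℝ) ≤ b * 2 ^ n := Int.floor_le _
            have h2n : (2:ℝ) ≤ 2 ^ n := by
              calc (2:ℝ) = 2 ^ 1 := (pow_one 2).symm
                _ ≤ 2 ^ n := pow_le_pow_right₀ (by norm_num) hn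
            rcases le_or_gt (⌊b * 2 ^ n⌋ + 1 - ⌊a * 2 ^ n⌋) 0 with hneg | hpos
            · have : t.card = 0 := by rw [h1, Int.toNat_of_nonpos hneg]
              rw [this]
              push_cast
              nlinarith
            · have h2' : ((⌊b * 2 ^ n⌋ + 1 - ⌊a * 2 ^ n⌋).toNat : ℤ)
                  = ⌊b * 2 ^ n⌋ + 1 - ⌊a * 2 ^ n⌋ := Int.toNat_of_nonneg hpos.le
              have hcd : (t.card : ℝ) = (⌊b * 2 ^ n⌋ : ℝ) + 1 - (⌊a * 2 ^ n⌋ : ℝ) := by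
                rw [h1]
                exact_mod_cast congrArg (Int.cast : ℤ → ℝ) h2'
              rw [hcd]
              linarith
          have hexp2 : (2:ℝ) ^ n * Real.exp (-(n:ℝ) * (c / 2)) ≤ Real.exp (-(n:ℝ)) := by
            have h2n : (2:ℝ) ^ n = Real.exp ((n:ℝ) * Real.log 2) := by
              rw [Real.exp_nat_mul, Real.exp_log (by norm_num : (0:ℝ) < 2)]
            rw [h2n, ← Real.exp_add]
            apply Real.exp_le_exp.2
            have : (n:ℝ) * (c / 2) ≥ (n:ℝ) * (Real.log 2 + 1) := by
              apply mul_le_mul_of_nonneg_left (by linarith) hnpos.le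
            nlinarith
          have hexpnn : (0:ℝ) ≤ Real.exp (-(n:ℝ) * (c/2)) := Real.exp_nonneg _
          nlinarith [Real.exp_nonneg (-(n:ℝ)), hcard,
            mul_le_mul_of_nonneg_left hexp2 (by linarith : (0:ℝ) ≤ (b - a + 1))]
  exact (hcover.trans_eq hsplit).trans hsum

theorem pure_dimension_implies_L1_convergence_aux
    (ν : Measure ℝ) [IsLocallyFiniteMeasure ν] (Δ : ℝ)
    (hdim : ∀ᵐ s ∂ν, Tendsto
      (fun t : ℝ => (1 / t) *
        Real.log ((ν (Set.Icc (s - Real.exp (-t)) (s + Real.exp (-t)))).toReal))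
      atTop (nhds (-Δ))) :
    ∀ a b : ℝ, Tendsto
      (fun n : ℕ => ∫ s in Set.Icc a b,
        |(-(1 / (n : ℝ)) * Real.log ((ν (dyadicInterval n s)).toReal)) - Δ * Real.log 2| ∂ν)
      atTop (nhds 0) := by
  intro a b
  rcases lt_or_ge b a with hlt | hab
  · simp only [Set.Icc_eq_empty (not_le.mpr hlt), Measure.restrict_empty,
      integral_zero_measure]
    exact tendsto_const_nhds
  -- setup
  have hlog2 : (0:ℝ) < Real.log 2 := Real.log_pos (by norm_num)
  set C' : ℝ := (ν (Set.Icc (a - 2) (b + 2))).toReal with hC'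
  set M : ℝ := |Real.log C'| + |Δ| * Real.log 2 + 2 * Real.log 2 + 2 with hM
  set c : ℝ := Δ * Real.log 2 + M with hcdef
  have habsΔ : Δ * Real.log 2 ≤ |Δ| * Real.log 2 :=
    mul_le_mul_of_nonneg_right (le_abs_self Δ) hlog2.le
  have hnegabsΔ : -(|Δ| * Real.log 2) ≤ Δ * Real.log 2 := by
    have := mul_le_mul_of_nonneg_right (neg_abs_le Δ) hlog2.le
    linarith
  have hMpos : 0 < M := by
    have : (0:ℝ) ≤ |Real.log C'| := abs_nonneg _
    have h2 : (0:ℝ) ≤ |Δ| * Real.log 2 := mul_nonneg (abs_nonneg _) hlog2.le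
    nlinarith
  have hc : 2 * Real.log 2 + 2 ≤ c := by
    rw [hcdef, hM]
    have : (0:ℝ) ≤ |Real.log C'| := abs_nonneg _
    linarith
  set u : ℕ → ℝ → ℝ := fun n s =>
    -(1 / (n : ℝ)) * Real.log ((ν (dyadicInterval n s)).toReal) with hu
  set F : ℕ → ℝ → ℝ := fun n s => |u n s - Δ * Real.log 2| with hF
  set g1 : ℕ → ℝ → ℝ := fun n s => min (F n s) M with hg1
  set g2 : ℕ → ℝ → ℝ := fun n s => max (u n s - c) 0 with hg2
  have hCfin : ν (Set.Icc (a - 2) (b + 2)) ≠ ∞ := (isCompact_Icc.measure_lt_top).ne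
  -- measurability
  have humeas : ∀ n, Measurable (u n) := by
    intro n
    exact measurable_dyadic_comp n
      (fun m => -(1 / (n : ℝ)) * Real.log ((ν (dIvl n m)).toReal))
  have hFmeas : ∀ n, Measurable (F n) := fun n => (humeas n).sub measurable_const |>.abs
  have hg1meas : ∀ n, Measurable (g1 n) := fun n => (hFmeas n).min measurable_const
  have hg2meas : ∀ n, Measurable (g2 n) := fun n => ((humeas n).sub measurable_const).max
    measurable_const
  have hFnonneg : ∀ n s, 0 ≤ F n s := fun n s => abs_nonneg _
  have hg2nonneg : ∀ n s, 0 ≤ g2 n s := fun n s => le_max_right _ _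
  haveI : IsFiniteMeasure (ν.restrict (Set.Icc a b)) := by
    constructor
    rw [Measure.restrict_apply_univ]
    exact isCompact_Icc.measure_lt_top
  -- key pointwise inequality
  have hkey : ∀ n : ℕ, 1 ≤ n → ∀ s ∈ Set.Icc a b, F n s ≤ g1 n s + g2 n s := by
    intro n hn s hs
    have hnpos : (0:ℝ) < n := by exact_mod_cast hn
    have hlow : -M ≤ u n s - Δ * Real.log 2 := by
      set x := (ν (dyadicInterval n s)).toReal with hx
      have hxnn : 0 ≤ x := ENNReal.toReal_nonneg
      have hsub : dyadicInterval n s ⊆ Set.Icc (a - 2) (b + 2) := by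
        refine (dyadicInterval_subset_ball n s).trans (Set.Icc_subset_Icc ?_ ?_)
        · have h1 : ((2:ℝ) ^ n)⁻¹ ≤ 1 := by
            rw [inv_le_one_iff₀]
            right
            exact one_le_pow₀ (by norm_num)
          have := hs.1
          linarith
        · have h1 : ((2:ℝ) ^ n)⁻¹ ≤ 1 := by
            rw [inv_le_one_iff₀]
            right
            exact one_le_pow₀ (by norm_num)
          have := hs.2
          linarith
      have hxC : x ≤ C' := ENNReal.toReal_mono hCfin (measure_mono hsub)
      rcases hxnn.eq_or_lt with h0 | hxpos
      · have : u n s = 0 := by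
          rw [hu]
          simp only [← hx, ← h0, Real.log_zero, mul_zero]
        rw [this]
        rw [hM]
        have h2 : (0:ℝ) ≤ |Real.log C'| := abs_nonneg _
        linarith
      · have hCpos : 0 < C' := lt_of_lt_of_le hxpos hxC
        have hlogx : Real.log x ≤ |Real.log C'| :=
          (Real.log_le_log hxpos hxC).trans (le_abs_self _)
        have h1n : 1 / (n:ℝ) ≤ 1 := by
          rw [div_le_one hnpos]; exact_mod_cast hn
        have h1npos : 0 < 1 / (n:ℝ) := by positivity
        have hule : -|Real.log C'| ≤ u n s := by
          rw [hu]
          simp only [← hx]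
          calc -|Real.log C'| ≤ -((1/(n:ℝ)) * |Real.log C'|) := by
                nlinarith [abs_nonneg (Real.log C')]
            _ ≤ -((1/(n:ℝ)) * Real.log x) := by
                have := mul_le_mul_of_nonneg_left hlogx h1npos.le
                linarith
            _ = -(1/(n:ℝ)) * Real.log x := by ring
        rw [hM]
        have h2 : (0:ℝ) ≤ |Real.log C'| := abs_nonneg _
        linarith
    rcases le_or_gt (F n s) M with hFM | hFM
    · have : g1 n s = F n s := min_eq_left hFM
      rw [this]
      linarith [hg2nonneg n s]
    · have hg1M : g1 n s = M := min_eq_right hFM.le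
      have hwpos : u n s - Δ * Real.log 2 > M := by
        rcases abs_cases (u n s - Δ * Real.log 2) with ⟨he, _⟩ | ⟨he, hneg⟩
        · rw [hF] at hFM
          simp only [he] at hFM
          exact hFM
        · exfalso
          rw [hF] at hFM
          simp only [he] at hFM
          linarith
      have hg2e : g2 n s = u n s - c := by
        rw [hg2, hcdef]
        apply max_eq_left
        linarith
      have hFe : F n s = u n s - Δ * Real.log 2 := abs_of_pos (by linarith)
      rw [hg1M, hg2e, hFe, hcdef]
      ring_nf
      linarith [le_refl (u n s)]
  -- integrability of g1
  have hg1int : ∀ n, Integrable (g1 n) (ν.restrict (Set.Icc a b)) := by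
    intro n
    refine (integrable_const M).mono' ((hg1meas n).aestronglyMeasurable) ?_
    refine Filter.Eventually.of_forall fun s => ?_
    rw [Real.norm_eq_abs, abs_of_nonneg (le_min (hFnonneg n s) hMpos.le)]
    exact min_le_right _ _
  -- g2 : lintegral bound and integrability
  have hg2lint : ∀ n : ℕ, 1 ≤ n →
      ∫⁻ s in Set.Icc a b, ENNReal.ofReal (g2 n s) ∂ν ≤
        ENNReal.ofReal ((b - a + 1) * (2 * Real.exp (-(n:ℝ)))) := by
    intro n hn
    have := tail_bound ν n hn a b hab c hc
    refine le_trans (le_of_eq ?_) this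
    rfl
  have hg2int : ∀ n : ℕ, 1 ≤ n → Integrable (g2 n) (ν.restrict (Set.Icc a b)) := by
    intro n hn
    constructor
    · exact (hg2meas n).aestronglyMeasurable
    · rw [hasFiniteIntegral_iff_ofReal (Filter.Eventually.of_forall (hg2nonneg n))]
      exact lt_of_le_of_lt (hg2lint n hn) ENNReal.ofReal_lt_top
  -- bound on the integral of g2
  have hg2bound : ∀ n : ℕ, 1 ≤ n →
      ∫ s in Set.Icc a b, g2 n s ∂ν ≤ (b - a + 1) * (2 * Real.exp (-(n:ℝ))) := by
    intro n hn
    rw [integral_eq_lintegral_of_nonneg_ae (Filter.Eventually.of_forall (hg2nonneg n))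
      ((hg2meas n).aestronglyMeasurable)]
    have hTnn : (0:ℝ) ≤ (b - a + 1) * (2 * Real.exp (-(n:ℝ))) :=
      mul_nonneg (by linarith) (by positivity)
    calc (∫⁻ s in Set.Icc a b, ENNReal.ofReal (g2 n s) ∂ν).toReal
        ≤ (ENNReal.ofReal ((b - a + 1) * (2 * Real.exp (-(n:ℝ))))).toReal :=
          ENNReal.toReal_mono ENNReal.ofReal_ne_top (hg2lint n hn)
      _ = (b - a + 1) * (2 * Real.exp (-(n:ℝ))) := ENNReal.toReal_ofReal hTnn
  -- integral of F bounded
  have hFbound : ∀ n : ℕ, 1 ≤ n →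
      ∫ s in Set.Icc a b, F n s ∂ν ≤
        (∫ s in Set.Icc a b, g1 n s ∂ν) + (b - a + 1) * (2 * Real.exp (-(n:ℝ))) := by
    intro n hn
    have hle : (fun s => F n s) ≤ᵐ[ν.restrict (Set.Icc a b)] fun s => g1 n s + g2 n s := by
      rw [EventuallyLE, ae_restrict_iff' measurableSet_Icc]
      exact Filter.Eventually.of_forall fun s hs => hkey n hn s hs
    have h1 : ∫ s in Set.Icc a b, F n s ∂ν ≤ ∫ s in Set.Icc a b, (g1 n s + g2 n s) ∂ν :=
      integral_mono_of_nonneg (Filter.Eventually.of_forall (hFnonneg n))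
        ((hg1int n).add (hg2int n hn)) hle
    rw [integral_add (hg1int n) (hg2int n hn)] at h1
    exact h1.trans (by linarith [hg2bound n hn])
  -- the integral of g1 tends to 0 by dominated convergence
  have hae : ∀ᵐ s ∂ν.restrict (Set.Icc a b), Tendsto (fun n => g1 n s) atTop (nhds 0) := by
    have h0 := ae_tendsto_dyadic ν Δ hdim a b
    rw [ae_restrict_iff' measurableSet_Icc]
    filter_upwards [h0] with s hs hsab
    have htu := hs hsab
    have hw : Tendsto (fun n => u n s - Δ * Real.log 2) atTop (nhds 0) := by
      have h' : Tendsto (fun n => u n s - Δ * Real.log 2) atTop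
          (nhds (Δ * Real.log 2 - Δ * Real.log 2)) :=
        Tendsto.sub htu tendsto_const_nhds
      rwa [sub_self] at h' 
    have hFt : Tendsto (fun n => F n s) atTop (nhds 0) := by
      have habs : Tendsto (fun y : ℝ => |y|) (nhds 0) (nhds 0) := by
        have := continuous_abs.tendsto (0:ℝ)
        simpa using this
      exact habs.comp hw
    have hmin : Tendsto (fun y : ℝ => min y M) (nhds 0) (nhds 0) := by
      have h := ((continuous_id (X := ℝ)).min (continuous_const (y := M))).tendsto (0:ℝ)
      simpa [min_eq_left hMpos.le] using h
    exact hmin.comp hFt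
  have hg1tendsto : Tendsto (fun n => ∫ s in Set.Icc a b, g1 n s ∂ν) atTop (nhds 0) := by
    have := tendsto_integral_of_dominated_convergence (fun _ => M)
      (fun n => (hg1meas n).aestronglyMeasurable) (integrable_const M)
      (fun n => Filter.Eventually.of_forall fun s => by
        rw [Real.norm_eq_abs, abs_of_nonneg (le_min (hFnonneg n s) hMpos.le)]
        exact min_le_right _ _) hae
    simpa using this
  -- the tail tends to 0
  have htail : Tendsto (fun n : ℕ => (b - a + 1) * (2 * Real.exp (-(n:ℝ)))) atTop (nhds 0) := by
    have hexp : Tendsto (fun n : ℕ => Real.exp (-(n:ℝ))) atTop (nhds 0) := by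
      have h1 : ∀ n : ℕ, Real.exp (-(n:ℝ)) = Real.exp (-1) ^ n := by
        intro n
        rw [← Real.exp_nat_mul]
        ring_nf
      have h2 : Tendsto (fun n : ℕ => Real.exp (-1) ^ n) atTop (nhds 0) :=
        tendsto_pow_atTop_nhds_zero_of_lt_one (Real.exp_nonneg _)
          (Real.exp_lt_one_iff.2 (by norm_num))
      exact h2.congr fun n => (h1 n).symm
    have := (hexp.const_mul 2).const_mul (b - a + 1)
    simpa using this
  -- squeeze
  have hupper : Tendsto (fun n : ℕ => (∫ s in Set.Icc a b, g1 n s ∂ν) +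
      (b - a + 1) * (2 * Real.exp (-(n:ℝ)))) atTop (nhds 0) := by
    have := hg1tendsto.add htail
    simpa using this
  refine tendsto_of_tendsto_of_tendsto_of_le_of_le' tendsto_const_nhds hupper ?_ ?_
  · exact Filter.Eventually.of_forall fun n =>
      integral_nonneg fun s => hFnonneg n s
  · filter_upwards [eventually_ge_atTop 1] with n hn
    exact hFbound n hn

/-- **Claim 3.13 (pure dimension implies local L¹ convergence).**
Let `ν` be a locally finite measure on `ℝ` such that for `ν`-a.e. `s`,
`(1/t)·log ν [s − e^{−t}, s + e^{−t}] → −Δ` as `t → ∞`.  Set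
`uₙ s = −(1/n)·log ν (τ̃ₙ s)`, where `τ̃ₙ s` is the level-`n` dyadic interval containing `s`.
Then `uₙ → Δ·log 2` locally in `L¹(ν)`: for every bounded interval `[a,b]`,
`∫_{[a,b]} |uₙ − Δ·log 2| dν → 0`. -/
theorem pure_dimension_implies_L1_convergence
    (ν : Measure ℝ) [IsLocallyFiniteMeasure ν] (Δ : ℝ)
    (hdim : ∀ᵐ s ∂ν, Tendsto
      (fun t : ℝ => (1 / t) *
        Real.log ((ν (Set.Icc (s - Real.exp (-t)) (s + Real.exp (-t)))).toReal))
      atTop (nhds (-Δ))) :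
    ∀ a b : ℝ, Tendsto
      (fun n : ℕ => ∫ s in Set.Icc a b,
        |(-(1 / (n : ℝ)) * Real.log ((ν (dyadicInterval n s)).toReal)) - Δ * Real.log 2| ∂ν)
      atTop (nhds 0) :=
  pure_dimension_implies_L1_convergence_aux ν Δ hdim
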